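/- Let r ≥ 2 and n ≥ 2r. Consider the graph G obtained from the balanced complete r-partite graph K_{n,...,n} with parts A_1,...,A_r by adding a spanning star inside each part. If S ⊆ V(G) is such that G[S] contains a K_r-factor, then for all i, | |A_i ∩ S| − |S|/r | < 2r. -/

import Mathlib

/-- `G[S]` contains a `K_r`-factor. -/
def krFactorOn (r : ℕ) {V : Type*} [DecidableEq V] (G : SimpleGraph V) (S : Finset V) : Prop :=
  ∃ P : Finset (Finset V),
    (∀ T ∈ P, T.card = r ∧ T ⊆ S ∧ ∀ x ∈ T, ∀ y ∈ T, x ≠ y → G.Adj x y) ∧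
    (∀ T ∈ P, ∀ T' ∈ P, T ≠ T' → Disjoint T T') ∧
    (∀ v ∈ S, ∃ T ∈ P, v ∈ T)

/-- In the balanced complete `r`-partite graph `K_{n,…,n}` with a spanning star added
inside each part (centered at the vertex with second coordinate `0`), every subset `S`
inducing a `K_r`-factor satisfies `||A_i ∩ S| - |S|/r| < 2r` for all `i`. -/
theorem stmt15 (r n : ℕ) (hr : 2 ≤ r) (hn : 2 * r ≤ n)
    (G : SimpleGraph (Fin r × Fin n))
    (hG : ∀ x y, G.Adj x y ↔ x ≠ y ∧ (x.1 ≠ y.1 ∨ x.2.val = 0 ∨ y.2.val = 0))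
    (S : Finset (Fin r × Fin n))
    (hS : krFactorOn r G S) :
    ∀ i : Fin r,
      |((S.filter (fun x => x.1 = i)).card : ℝ) - (S.card : ℝ) / r| < 2 * r := by
  intro i
  obtain ⟨P, hP1, hP2, hP3⟩ := hS
  have hn0 : 0 < n := by omega
  have hr0 : 0 < r := by omega
  have hSeq : S = P.biUnion id := by
    ext v
    simp only [Finset.mem_biUnion, id_eq]
    exact ⟨hP3 v, fun ⟨T, hT, hv⟩ => (hP1 T hT).2.1 hv⟩
  set k := P.card with hk
  have hScard : S.card = r * k := by
    have hbu := Finset.card_biUnion (s := P) (t := id)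
      (fun T hT T' hT' h => hP2 T hT T' hT' h)
    rw [hSeq, hbu]
    simp only [id_eq]
    rw [Finset.sum_congr rfl (fun T hT => (hP1 T hT).1), Finset.sum_const,
      smul_eq_mul, mul_comm]
  have key : ∀ j : Fin r, (S.filter (fun x => x.1 = j)).card ≤ k + 1 := by
    intro j
    have hcard : (S.filter (fun x => x.1 = j)).card
        = ∑ T ∈ P, (T.filter (fun x => x.1 = j)).card := by
      rw [hSeq, Finset.filter_biUnion]
      exact Finset.card_biUnion (fun T hT T' hT' h =>
        (hP2 T hT T' hT' h).mono (Finset.filter_subset _ _) (Finset.filter_subset _ _))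
    have hle2 : ∀ T ∈ P, (T.filter (fun x => x.1 = j)).card ≤ 2 := by
      intro T hT
      have h1 : ((T.filter (fun x => x.1 = j)).filter (fun x => x.2.val = 0)).card ≤ 1 := by
        apply Finset.card_le_one.2
        intro a ha b hb
        simp only [Finset.mem_filter] at ha hb
        ext
        · rw [ha.1.2, hb.1.2]
        · rw [ha.2, hb.2]
      have h2 : ((T.filter (fun x => x.1 = j)).filter (fun x => ¬ x.2.val = 0)).card ≤ 1 := by
        apply Finset.card_le_one.2
        intro a ha b hb
        simp only [Finset.mem_filter] at ha hb
        by_contra hab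
        have := (hG a b).1 ((hP1 T hT).2.2 a ha.1.1 b hb.1.1 hab)
        rw [ha.1.2, hb.1.2] at this
        simp at this
        tauto
      calc (T.filter (fun x => x.1 = j)).card
          = _ + _ := (Finset.card_filter_add_card_filter_not
            (fun x => x.2.val = 0)).symm
        _ ≤ 2 := by omega
    have hctr : ∀ T ∈ P, 2 ≤ (T.filter (fun x => x.1 = j)).card →
        (j, (⟨0, hn0⟩ : Fin n)) ∈ T := by
      intro T hT h2
      obtain ⟨a, ha, b, hb, hab⟩ := Finset.one_lt_card.1 h2
      simp only [Finset.mem_filter] at ha hb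
      have hadj := (hG a b).1 ((hP1 T hT).2.2 a ha.1 b hb.1 hab)
      rcases hadj.2 with h | h | h
      · exact absurd (ha.2.trans hb.2.symm) h
      · have : a = (j, (⟨0, hn0⟩ : Fin n)) := Prod.ext ha.2 (Fin.ext h)
        exact this ▸ ha.1
      · have : b = (j, (⟨0, hn0⟩ : Fin n)) := Prod.ext hb.2 (Fin.ext h)
        exact this ▸ hb.1
    rw [hcard]
    by_cases hex : ∃ T0 ∈ P, (j, (⟨0, hn0⟩ : Fin n)) ∈ T0
    · obtain ⟨T0, hT0, hmem⟩ := hex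
      rw [← Finset.sum_erase_add _ _ hT0]
      have herase : ∑ T ∈ P.erase T0, (T.filter (fun x => x.1 = j)).card ≤ k - 1 := by
        calc ∑ T ∈ P.erase T0, (T.filter (fun x => x.1 = j)).card
            ≤ ∑ T ∈ P.erase T0, 1 := by
              apply Finset.sum_le_sum
              intro T hT'
              have hTP := Finset.mem_of_mem_erase hT'
              by_contra hgt
              have hmem' := hctr T hTP (by omega)
              have hdisj := hP2 T hTP T0 hT0 (Finset.ne_of_mem_erase hT')
              exact (Finset.disjoint_left.1 hdisj hmem') hmem
          _ = (P.erase T0).card := by simp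
          _ = k - 1 := Finset.card_erase_of_mem hT0
      have hk1 : 1 ≤ k := Finset.card_pos.2 ⟨T0, hT0⟩
      have := hle2 T0 hT0
      omega
    · push_neg at hex
      calc ∑ T ∈ P, (T.filter (fun x => x.1 = j)).card ≤ ∑ T ∈ P, 1 := by
            apply Finset.sum_le_sum
            intro T hT
            by_contra hgt
            exact hex T hT (hctr T hT (by omega))
        _ = k := by simp [hk]
        _ ≤ k + 1 := Nat.le_succ k
  have hsum : ∑ j : Fin r, (S.filter (fun x => x.1 = j)).card = S.card :=
    (Finset.card_eq_sum_card_fiberwise (f := Prod.fst) (t := Finset.univ)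
      (fun x _ => Finset.mem_univ _)).symm
  set A := (S.filter (fun x => x.1 = i)).card with hA
  have h2 : r * k ≤ A + (r - 1) * (k + 1) := by
    have hsplit : ∑ j ∈ Finset.univ.erase i, (S.filter (fun x => x.1 = j)).card + A
        = r * k := by
      rw [hA, ← hScard, ← hsum]
      exact Finset.sum_erase_add _ _ (Finset.mem_univ i)
    have hb : ∑ j ∈ Finset.univ.erase i, (S.filter (fun x => x.1 = j)).card
        ≤ (r - 1) * (k + 1) := by
      calc _ ≤ ∑ _j ∈ Finset.univ.erase i, (k + 1) := Finset.sum_le_sum (fun j _ => key j)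
        _ = (r - 1) * (k + 1) := by
            rw [Finset.sum_const, smul_eq_mul, Finset.card_erase_of_mem (Finset.mem_univ i)]
            simp
    omega
  have h1 : A ≤ k + 1 := key i
  have hdiv : (S.card : ℝ) / r = k := by
    rw [hScard]; push_cast; field_simp
  rw [hdiv, abs_sub_lt_iff]
  have h2' : (r : ℝ) * k ≤ A + ((r : ℝ) - 1) * (k + 1) := by
    have := h2
    have hcast : ((r - 1 : ℕ) : ℝ) = (r : ℝ) - 1 := by
      rw [Nat.cast_sub (by omega)]; simp
    push_cast [← hcast]
    exact_mod_cast h2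
  have h1' : (A : ℝ) ≤ k + 1 := by exact_mod_cast h1
  have hr' : (2 : ℝ) ≤ r := by exact_mod_cast hr
  constructor
  · nlinarith
  · nlinarith
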